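/- The antipode identity for exponential iterated integrals: for a bounded measurable h : [0,1] → ℂ define (Rh)(t) := −h(1−t) (the pullback along the reversed path λ^{-1} of a form pulling back to h along λ). Then for bounded measurable d_1, …, d_n, f_{12}, …, f_{(n−1)n} : [0,1] → ℂ, ∫ e^{R d_1} (R f_{12}) e^{R d_2} ⋯ (R f_{(n−1)n}) e^{R d_n} = ∫ e^{−d_n} (−f_{(n−1)n}) e^{−d_{n−1}} ⋯ (−f_{12}) e^{−d_1}, i.e. ∫_{λ^{-1}} e^{δ_1} ω_{12} ⋯ ω_{(n−1)n} e^{δ_n} = ∫_λ e^{−δ_n} (−ω_{(n−1)n}) ⋯ (−ω_{12}) e^{−δ_1}. -/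

import Mathlib

open MeasureTheory Set

/-- The simplex `{t | a ≤ t 0 ≤ t 1 ≤ ⋯ ≤ t (n-1) ≤ b}`. -/
def simplexSet (a b : ℝ) (n : ℕ) : Set (Fin n → ℝ) :=
  {t | (∀ i, a ≤ t i ∧ t i ≤ b) ∧ ∀ i j : Fin n, i ≤ j → t i ≤ t j}

/-- The iterated integral `∫_{a ≤ t_1 ≤ ⋯ ≤ t_n ≤ b} w_1(t_1) ⋯ w_n(t_n)` of a word
`w` of complex-valued functions; it equals `1` for the empty word. -/
noncomputable def itIntL (a b : ℝ) (w : List (ℝ → ℂ)) : ℂ :=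
  ∫ t in simplexSet a b w.length, ∏ i : Fin w.length, w.get i (t i)

/-- The word `d_0^{m_0} f_0 d_1^{m_1} f_1 ⋯ f_{n-1} d_n^{m_n}` (with `d_i` repeated `m_i`
times), one of the terms in the defining sum of an exponential iterated integral. -/
def expWord {n : ℕ} (d : Fin (n + 1) → ℝ → ℂ) (f : Fin n → ℝ → ℂ)
    (m : Fin (n + 1) → ℕ) : List (ℝ → ℂ) :=
  (List.ofFn fun i : Fin n =>
      List.replicate (m i.castSucc) (d i.castSucc) ++ [f i]).flatten
    ++ List.replicate (m (Fin.last n)) (d (Fin.last n))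

/-- The exponential iterated integral `∫ e^{d_0} f_0 e^{d_1} f_1 ⋯ f_{n-1} e^{d_n}`
over `[a,b]`: the sum over all `(m_0, …, m_n) ∈ ℕ^{n+1}` of the iterated integrals
of the words `d_0^{m_0} f_0 d_1^{m_1} ⋯ f_{n-1} d_n^{m_n}`. -/
noncomputable def expItInt (a b : ℝ) {n : ℕ} (d : Fin (n + 1) → ℝ → ℂ)
    (f : Fin n → ℝ → ℂ) : ℂ :=
  ∑' m : Fin (n + 1) → ℕ, itIntL a b (expWord d f m)

/-- The pullback along the reversed path `λ⁻¹` of a 1-form pulling back to `h`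
along `λ`. -/
def pathRev (h : ℝ → ℂ) : ℝ → ℂ := fun t => -h (1 - t)

/- ### Auxiliary material -/

/-- Iterated integral over the standard simplex, as a function of a tuple of words. -/
noncomputable def itIntF (n : ℕ) (g : Fin n → ℝ → ℂ) : ℂ :=
  ∫ t in simplexSet 0 1 n, ∏ i, g i (t i)

lemma itIntL_eq_itIntF (w : List (ℝ → ℂ)) {n : ℕ} (h : w.length = n) (g : Fin n → ℝ → ℂ)
    (hg : ∀ i : Fin n, w.get (Fin.cast h.symm i) = g i) : itIntL 0 1 w = itIntF n g := by
  subst h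
  unfold itIntL itIntF
  congr 1
  funext t
  exact Finset.prod_congr rfl fun i _ => by rw [← hg i]; rfl

/-- The coordinate-reversing affine involution preserves the simplex. -/
lemma simplex_rev_mem {n : ℕ} {t : Fin n → ℝ} (ht : t ∈ simplexSet 0 1 n) :
    (fun i => 1 - t i.rev) ∈ simplexSet 0 1 n := by
  obtain ⟨hb, hm⟩ := ht
  refine ⟨fun i => ?_, fun i j hij => ?_⟩
  · have := hb i.rev
    refine ⟨?_, ?_⟩ <;> · show _ ≤ _; dsimp only; linarith [this.1, this.2]
  · have : t j.rev ≤ t i.rev := hm _ _ (Fin.rev_le_rev.mpr hij)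
    show (1 : ℝ) - t i.rev ≤ 1 - t j.rev
    linarith

/-- Change of variables `t ↦ (i ↦ 1 - t (rev i))` in the simplex integral. -/
lemma itIntF_change (n : ℕ) (g : Fin n → ℝ → ℂ) :
    itIntF n g = ∫ t in simplexSet 0 1 n, ∏ i, g i.rev (1 - t i) := by
  set T : (Fin n → ℝ) ≃ᵐ (Fin n → ℝ) :=
    MeasurableEquiv.arrowCongr' Fin.revPerm (MeasurableEquiv.subLeft (1 : ℝ)) with hTdef
  have hTapp : ∀ (t : Fin n → ℝ) (i : Fin n), T t i = 1 - t i.rev := fun _ _ => rfl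
  have hT : MeasurePreserving T volume volume :=
    volume_preserving_arrowCongr' _ _ (Measure.measurePreserving_sub_left volume 1)
  have hpre : T ⁻¹' simplexSet 0 1 n = simplexSet 0 1 n := by
    ext t
    simp only [mem_preimage]
    constructor
    · intro h
      have := simplex_rev_mem h
      convert this using 1
      funext i
      simp [hTapp, Fin.rev_rev]
    · intro h
      have := simplex_rev_mem h
      convert this using 1
      exact funext fun i => hTapp t i
  have key := hT.setIntegral_preimage_emb T.measurableEmbedding
    (fun t => ∏ i, g i (t i)) (simplexSet 0 1 n)
  rw [hpre] at key
  rw [itIntF, ← key]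
  congr 1
  funext t
  calc ∏ i, g i (T t i) = ∏ i, g i (1 - t i.rev) := by simp [hTapp]
    _ = ∏ i, g i.rev (1 - t i) := by
        rw [← Equiv.prod_comp Fin.revPerm (fun i => g i.rev (1 - t i))]
        simp [Fin.rev_rev]

/-- The key analytic identity on words: reversing the path reverses the word and negates. -/
lemma itIntL_pathRev (w : List (ℝ → ℂ)) :
    itIntL 0 1 (w.map pathRev) =
      itIntL 0 1 ((w.map (fun h t => -h t)).reverse) := by
  rw [itIntL_eq_itIntF (w.map pathRev) (List.length_map _)
      (fun i => pathRev (w.get i)) (fun i => by simp),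
    itIntL_eq_itIntF ((w.map (fun h t => -h t)).reverse) (by simp)
      (fun i => fun t => -(w.get i.rev t)) ?_]
  · rw [itIntF_change w.length (fun i => fun t => -(w.get i.rev t))]
    unfold itIntF
    congr 1
    funext t
    refine Finset.prod_congr rfl fun i _ => ?_
    simp [pathRev, Fin.rev_rev]
  · intro i
    have hidx : w.length - 1 - (i : ℕ) = ((i.rev : Fin w.length) : ℕ) := by
      simp only [Fin.val_rev]
      omega
    simp only [List.get_eq_getElem, Fin.coe_cast, List.getElem_reverse, List.getElem_map,
      List.length_map, hidx]

lemma expWord_map {n : ℕ} (g : (ℝ → ℂ) → ℝ → ℂ) (d : Fin (n + 1) → ℝ → ℂ)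
    (f : Fin n → ℝ → ℂ) (m : Fin (n + 1) → ℕ) :
    expWord (fun i => g (d i)) (fun i => g (f i)) m = (expWord d f m).map g := by
  simp [expWord, List.map_append, List.map_flatten, List.map_ofFn, List.map_replicate,
    Function.comp_def]

lemma expWord_cons {n : ℕ} (d0 f0 : ℝ → ℂ) (m0 : ℕ) (d : Fin (n + 1) → ℝ → ℂ)
    (f : Fin n → ℝ → ℂ) (m : Fin (n + 1) → ℕ) :
    expWord (Fin.cons d0 d) (Fin.cons f0 f) (Fin.cons m0 m) =
      List.replicate m0 d0 ++ f0 :: expWord d f m := by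
  simp only [expWord, List.ofFn_succ, Fin.castSucc_zero, Fin.cons_zero, Fin.cons_succ,
    ← Fin.succ_castSucc, ← Fin.succ_last, List.flatten_cons, List.append_assoc,
    List.cons_append, List.nil_append]

lemma expWord_snoc {n : ℕ} (dl fl : ℝ → ℂ) (ml : ℕ) (d : Fin (n + 1) → ℝ → ℂ)
    (f : Fin n → ℝ → ℂ) (m : Fin (n + 1) → ℕ) :
    expWord (Fin.snoc d dl) (Fin.snoc f fl) (Fin.snoc m ml) =
      expWord d f m ++ fl :: List.replicate ml dl := by
  simp only [expWord, List.ofFn_succ', List.concat_eq_append, Fin.snoc_castSucc,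
    Fin.snoc_last, List.flatten_append, List.flatten_cons,
    List.flatten_nil, List.append_nil, List.append_assoc, List.cons_append, List.nil_append]

lemma expWord_reverse {n : ℕ} (d : Fin (n + 1) → ℝ → ℂ) (f : Fin n → ℝ → ℂ)
    (m : Fin (n + 1) → ℕ) :
    (expWord d f m).reverse =
      expWord (fun i => d i.rev) (fun i => f i.rev) (fun i => m i.rev) := by
  induction n with
  | zero =>
      have h0 : ∀ i : Fin 1, i.rev = i := fun i => Subsingleton.elim _ _
      simp [expWord, h0, List.reverse_replicate]
  | succ n ih =>
      have hd := Fin.snoc_init_self d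
      have hf := Fin.snoc_init_self f
      have hm := Fin.snoc_init_self m
      calc (expWord d f m).reverse
          = (expWord (Fin.snoc (Fin.init d) (d (Fin.last _)))
              (Fin.snoc (Fin.init f) (f (Fin.last _)))
              (Fin.snoc (Fin.init m) (m (Fin.last _)))).reverse := by rw [hd, hf, hm]
        _ = List.replicate (m (Fin.last _)) (d (Fin.last _)) ++
              f (Fin.last _) :: (expWord (Fin.init d) (Fin.init f) (Fin.init m)).reverse := by
            rw [expWord_snoc]
            simp [List.reverse_append, List.reverse_replicate]
        _ = List.replicate (m (Fin.last _)) (d (Fin.last _)) ++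
              f (Fin.last _) :: expWord (fun i => Fin.init d i.rev)
                (fun i => Fin.init f i.rev) (fun i => Fin.init m i.rev) := by rw [ih]
        _ = expWord (fun i => d i.rev) (fun i => f i.rev) (fun i => m i.rev) := by
            rw [show (fun i : Fin (n + 2) => d i.rev) =
                Fin.cons (d (Fin.last _)) (fun i : Fin (n + 1) => Fin.init d i.rev) by
                  funext i
                  refine Fin.cases ?_ (fun j => ?_) i
                  · simp [Fin.rev_zero]
                  · simp [Fin.cons_succ, Fin.init, Fin.rev_succ],
              show (fun i : Fin (n + 1) => f i.rev) =
                Fin.cons (f (Fin.last _)) (fun i : Fin n => Fin.init f i.rev) by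
                  funext i
                  refine Fin.cases ?_ (fun j => ?_) i
                  · simp [Fin.rev_zero]
                  · simp [Fin.cons_succ, Fin.init, Fin.rev_succ],
              show (fun i : Fin (n + 2) => m i.rev) =
                Fin.cons (m (Fin.last _)) (fun i : Fin (n + 1) => Fin.init m i.rev) by
                  funext i
                  refine Fin.cases ?_ (fun j => ?_) i
                  · simp [Fin.rev_zero]
                  · simp [Fin.cons_succ, Fin.init, Fin.rev_succ],
              expWord_cons]

/-- the antipode identity
`∫_{λ⁻¹} e^{δ_1} ω_{12} ⋯ ω_{(n-1)n} e^{δ_n}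
  = ∫_λ e^{-δ_n} (-ω_{(n-1)n}) ⋯ (-ω_{12}) e^{-δ_1}` in pulled-back form. -/
theorem stmt8 {n : ℕ} (d : Fin (n + 1) → ℝ → ℂ) (f : Fin n → ℝ → ℂ)
    (hdm : ∀ i, Measurable (d i)) (hfm : ∀ i, Measurable (f i))
    (hdb : ∀ i, ∃ C, ∀ t ∈ Icc (0 : ℝ) 1, ‖d i t‖ ≤ C)
    (hfb : ∀ i, ∃ C, ∀ t ∈ Icc (0 : ℝ) 1, ‖f i t‖ ≤ C) :
    expItInt 0 1 (fun i => pathRev (d i)) (fun i => pathRev (f i)) =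
      expItInt 0 1 (fun i t => -d i.rev t) (fun i t => -f i.rev t) := by
  unfold expItInt
  rw [← Equiv.tsum_eq
    (Function.Involutive.toPerm (fun (m : Fin (n + 1) → ℕ) => fun i => m i.rev)
      (fun m => by funext i; simp [Fin.rev_rev]))
    (fun m => itIntL 0 1 (expWord (fun i t => -d i.rev t) (fun i t => -f i.rev t) m))]
  refine tsum_congr fun m => ?_
  show _ = itIntL 0 1 (expWord (fun i t => -d i.rev t) (fun i t => -f i.rev t)
    (fun i => m i.rev))
  have h1 : expWord (fun i => pathRev (d i)) (fun i => pathRev (f i)) m =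
      (expWord d f m).map pathRev := expWord_map pathRev d f m
  have h2 : expWord (fun i t => -d i.rev t) (fun i t => -f i.rev t) (fun i => m i.rev) =
      ((expWord d f m).map (fun h t => -h t)).reverse := by
    rw [← expWord_map (fun h t => -h t) d f m, expWord_reverse]
  rw [h1, h2, itIntL_pathRev]
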